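/- Let D ≥ 3 be an integer. The Cayley graph of ℤ² with generating set {(1,0),(0,1)} does not have a coexact 1-Laplacian spectral gap for D. Equivalently: for every ε > 0 there exists a finitely supported closed 1-cochain f on this Cayley graph with Σ_{e∈E} f(e)² > 0 and Σ_{c face of parameter D} ((df)(c))² < ε·Σ_{e∈E} f(e)². -/

import Mathlib

/-- The Cayley graph of a group `Γ` with respect to a finite generating set `S`:
distinct `g, h` are adjacent iff `g⁻¹ * h ∈ S ∪ S⁻¹`. -/
def cayley {Γ : Type*} [Group Γ] (S : Finset Γ) : SimpleGraph Γ where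
  Adj g h := g ≠ h ∧ (g⁻¹ * h ∈ S ∨ h⁻¹ * g ∈ S)
  symm := ⟨fun g h ⟨hne, hmem⟩ => ⟨hne.symm, hmem.symm⟩⟩
  loopless := ⟨fun g ⟨hne, _⟩ => hne rfl⟩

/-- The boundary `∂f` of a 1-cochain `f` on the oriented edge set `E = Γ × S` of the
Cayley graph: `∂f(v) = Σ_{s∈S} (f(v·s⁻¹, s) − f(v,s))`. -/
def cayBdry {Γ : Type*} [Group Γ] (S : Finset Γ) (f : Γ × ↥S → ℝ) (v : Γ) : ℝ :=
  ∑ s : ↥S, (f (v * (s : Γ)⁻¹, s) - f (v, s))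

open Classical in
/-- The signed total value of the 1-cochain `f` over the oriented step from `u` to `v`:
edges `(u,s)` with `u·s = v` count positively, edges `(v,s)` with `v·s = u` negatively. -/
noncomputable def cayStep {Γ : Type*} [Group Γ] (S : Finset Γ) (f : Γ × ↥S → ℝ)
    (u v : Γ) : ℝ :=
  (∑ s : ↥S, if u * (s : Γ) = v then f (u, s) else 0) -
    (∑ s : ↥S, if v * (s : Γ) = u then f (v, s) else 0)

/-- The signed sum of a 1-cochain `f` along a walk `w` of the Cayley graph. -/
noncomputable def cayWalkSum {Γ : Type*} [Group Γ] (S : Finset Γ) (f : Γ × ↥S → ℝ)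
    {u v : Γ} (w : (cayley S).Walk u v) : ℝ :=
  (w.darts.map (fun d => cayStep S f d.toProd.1 d.toProd.2)).sum

/-- A set of (unoriented) edges of a simple graph `H` is a face of parameter `D` if it is
the edge set of some cycle of `H` of length at most `D`.  A cycle is determined, up to
rotation and reversal, by its edge set. -/
def IsFaceSet {V : Type*} (H : SimpleGraph V) (D : ℕ) (c : Set (Sym2 V)) : Prop :=
  ∃ (v : V) (w : H.Walk v v), w.IsCycle ∧ w.length ≤ D ∧ {e | e ∈ w.edges} = c

/-- The type of faces of parameter `D` of a simple graph `H`. -/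
def Face {V : Type*} (H : SimpleGraph V) (D : ℕ) : Type _ :=
  {c : Set (Sym2 V) // IsFaceSet H D c}

/-- `(df)(c)` for a 1-cochain `f` on the Cayley graph and a face `c`: the signed sum of
`f` along a traversal of the cycle `c` (a chosen orientation of the face). -/
noncomputable def cayFaceVal {Γ : Type*} [Group Γ] (S : Finset Γ) (D : ℕ)
    (f : Γ × ↥S → ℝ) (c : Face (cayley S) D) : ℝ :=
  cayWalkSum S f c.2.choose_spec.choose

/-- `Cay(Γ,S)` has a coexact 1-Laplacian spectral gap for `D`: there is `ε > 0` with
`ε·Σ_e f(e)² ≤ Σ_{c face} ((df)(c))²` for every finitely supported closed 1-cochain `f`. -/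
noncomputable def CayHasGap {Γ : Type*} [Group Γ] (S : Finset Γ) (D : ℕ) : Prop :=
  ∃ ε : ℝ, 0 < ε ∧ ∀ f : Γ × ↥S → ℝ, (Function.support f).Finite →
    (∀ v, cayBdry S f v = 0) →
    ε * ∑' e : Γ × ↥S, f e ^ 2 ≤ ∑' c : Face (cayley S) D, cayFaceVal S D f c ^ 2

/-- The group `ℤ²` (written multiplicatively) with its standard generating set
`{(1,0), (0,1)}`. -/
def Z2gens : Finset (Multiplicative (ℤ × ℤ)) :=
  {Multiplicative.ofAdd ((1 : ℤ), (0 : ℤ)), Multiplicative.ofAdd ((0 : ℤ), (1 : ℤ))}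


-- ===== basic setup =====
namespace Stmt11

abbrev G := Multiplicative (ℤ × ℤ)
def g1 : G := Multiplicative.ofAdd ((1:ℤ), (0:ℤ))
def g2 : G := Multiplicative.ofAdd ((0:ℤ), (1:ℤ))

lemma g1_ne_g2 : g1 ≠ g2 := by decide

lemma g1_mem : g1 ∈ Z2gens := by simp [Z2gens, g1]
lemma g2_mem : g2 ∈ Z2gens := by simp [Z2gens, g2]

def s1 : ↥Z2gens := ⟨g1, g1_mem⟩
def s2 : ↥Z2gens := ⟨g2, g2_mem⟩

lemma s1_ne_s2 : s1 ≠ s2 := by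
  intro h; exact g1_ne_g2 (congrArg Subtype.val h)

lemma univ_eq : (Finset.univ : Finset ↥Z2gens) = {s1, s2} := by
  ext ⟨x, hx⟩
  simp only [Finset.mem_univ, true_iff, Finset.mem_insert, Finset.mem_singleton]
  simp only [Z2gens, Finset.mem_insert, Finset.mem_singleton] at hx
  rcases hx with h | h
  · left; exact Subtype.ext h
  · right; exact Subtype.ext h

lemma sum_pair (F : ↥Z2gens → ℝ) : ∑ s : ↥Z2gens, F s = F s1 + F s2 := by
  rw [univ_eq, Finset.sum_pair s1_ne_s2]

def X (v : G) : ℤ := (Multiplicative.toAdd v).1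
def Y (v : G) : ℤ := (Multiplicative.toAdd v).2

@[simp] lemma X_mul (u v : G) : X (u * v) = X u + X v := rfl
@[simp] lemma Y_mul (u v : G) : Y (u * v) = Y u + Y v := rfl
@[simp] lemma X_g1 : X g1 = 1 := rfl
@[simp] lemma Y_g1 : Y g1 = 0 := rfl
@[simp] lemma X_g2 : X g2 = 0 := rfl
@[simp] lemma Y_g2 : Y g2 = 1 := rfl
@[simp] lemma X_inv (u : G) : X u⁻¹ = - X u := rfl
@[simp] lemma Y_inv (u : G) : Y u⁻¹ = - Y u := rfl
@[simp] lemma X_ofAdd (p : ℤ × ℤ) : X (Multiplicative.ofAdd p) = p.1 := rfl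
@[simp] lemma Y_ofAdd (p : ℤ × ℤ) : Y (Multiplicative.ofAdd p) = p.2 := rfl

lemma G_ext {u v : G} (hx : X u = X v) (hy : Y u = Y v) : u = v := by
  have : Multiplicative.toAdd u = Multiplicative.toAdd v := Prod.ext hx hy
  exact Multiplicative.toAdd.injective this

lemma adj_cases {u v : G} (h : (cayley Z2gens).Adj u v) :
    v = u * g1 ∨ v = u * g2 ∨ u = v * g1 ∨ u = v * g2 := by
  have h' : u ≠ v ∧ (u⁻¹ * v ∈ Z2gens ∨ v⁻¹ * u ∈ Z2gens) := h
  rcases h'.2 with h2 | h2 <;>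
    simp only [Z2gens, Finset.mem_insert, Finset.mem_singleton] at h2
  · rcases h2 with h3 | h3
    · exact Or.inl (eq_mul_of_inv_mul_eq h3)
    · exact Or.inr (Or.inl (eq_mul_of_inv_mul_eq h3))
  · rcases h2 with h3 | h3
    · exact Or.inr (Or.inr (Or.inl (eq_mul_of_inv_mul_eq h3)))
    · exact Or.inr (Or.inr (Or.inr (eq_mul_of_inv_mul_eq h3)))

lemma adj_unit_step {u v : G} (h : (cayley Z2gens).Adj u v) :
    |X v - X u| + |Y v - Y u| = 1 := by
  rcases adj_cases h with h | h | h | h <;> subst h <;> simp [g1, g2]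

end Stmt11

-- ===== step lemmas =====
namespace Stmt11
open SimpleGraph

lemma cayStep_eq (f : G × ↥Z2gens → ℝ) (u v : G) :
    cayStep Z2gens f u v =
      ((if u * g1 = v then f (u, s1) else 0) + (if u * g2 = v then f (u, s2) else 0)) -
      ((if v * g1 = u then f (v, s1) else 0) + (if v * g2 = u then f (v, s2) else 0)) := by
  unfold cayStep
  rw [sum_pair, sum_pair]
  simp only [show ((s1 : G)) = g1 from rfl, show ((s2 : G)) = g2 from rfl]

noncomputable def grad (ψ : G → ℝ) : G × ↥Z2gens → ℝ := fun p => ψ (p.1 * (p.2 : G)) - ψ p.1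

lemma grad_s1 (ψ : G → ℝ) (v : G) : grad ψ (v, s1) = ψ (v * g1) - ψ v := rfl
lemma grad_s2 (ψ : G → ℝ) (v : G) : grad ψ (v, s2) = ψ (v * g2) - ψ v := rfl

lemma cayStep_grad (ψ : G → ℝ) {u v : G} (h : (cayley Z2gens).Adj u v) :
    cayStep Z2gens (grad ψ) u v = ψ v - ψ u := by
  have hXY : ∀ a b : G, a = b → X a = X b ∧ Y a = Y b := by rintro a b rfl; exact ⟨rfl, rfl⟩
  rcases adj_cases h with hc | hc | hc | hc <;> subst hc <;> rw [cayStep_eq]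
  · rw [if_pos rfl,
      if_neg (fun hh => by obtain ⟨h1, h2⟩ := hXY _ _ hh; simp [g1, g2] at h1 h2; all_goals omega),
      if_neg (fun hh => by obtain ⟨h1, h2⟩ := hXY _ _ hh; simp [g1, g2] at h1 h2; all_goals omega),
      if_neg (fun hh => by obtain ⟨h1, h2⟩ := hXY _ _ hh; simp [g1, g2] at h1 h2; all_goals omega)]
    rw [grad_s1]; ring
  · rw [if_neg (fun hh => by obtain ⟨h1, h2⟩ := hXY _ _ hh; simp [g1, g2] at h1 h2; all_goals omega),
      if_pos rfl,
      if_neg (fun hh => by obtain ⟨h1, h2⟩ := hXY _ _ hh; simp [g1, g2] at h1 h2; all_goals omega),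
      if_neg (fun hh => by obtain ⟨h1, h2⟩ := hXY _ _ hh; simp [g1, g2] at h1 h2; all_goals omega)]
    rw [grad_s2]; ring
  · rw [if_neg (fun hh => by obtain ⟨h1, h2⟩ := hXY _ _ hh; simp [g1, g2] at h1 h2; all_goals omega),
      if_neg (fun hh => by obtain ⟨h1, h2⟩ := hXY _ _ hh; simp [g1, g2] at h1 h2; all_goals omega),
      if_pos rfl,
      if_neg (fun hh => by obtain ⟨h1, h2⟩ := hXY _ _ hh; simp [g1, g2] at h1 h2; all_goals omega)]
    rw [grad_s1]; ring
  · rw [if_neg (fun hh => by obtain ⟨h1, h2⟩ := hXY _ _ hh; simp [g1, g2] at h1 h2; all_goals omega),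
      if_neg (fun hh => by obtain ⟨h1, h2⟩ := hXY _ _ hh; simp [g1, g2] at h1 h2; all_goals omega),
      if_neg (fun hh => by obtain ⟨h1, h2⟩ := hXY _ _ hh; simp [g1, g2] at h1 h2; all_goals omega),
      if_pos rfl]
    rw [grad_s2]; ring

lemma cayWalkSum_nil (f : G × ↥Z2gens → ℝ) (u : G) :
    cayWalkSum Z2gens f (Walk.nil : (cayley Z2gens).Walk u u) = 0 := rfl

lemma cayWalkSum_cons (f : G × ↥Z2gens → ℝ) {u x v : G} (h : (cayley Z2gens).Adj u x)
    (p : (cayley Z2gens).Walk x v) :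
    cayWalkSum Z2gens f (Walk.cons h p) = cayStep Z2gens f u x + cayWalkSum Z2gens f p := by
  unfold cayWalkSum
  simp [Walk.darts_cons]

lemma cayWalkSum_grad (ψ : G → ℝ) {u v : G} (w : (cayley Z2gens).Walk u v) :
    cayWalkSum Z2gens (grad ψ) w = ψ v - ψ u := by
  induction w with
  | nil => simp [cayWalkSum_nil]
  | cons h p ih => rw [cayWalkSum_cons, cayStep_grad _ h, ih]; ring

lemma cayStep_sub (f g : G × ↥Z2gens → ℝ) (u v : G) :
    cayStep Z2gens (fun p => f p - g p) u v = cayStep Z2gens f u v - cayStep Z2gens g u v := by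
  rw [cayStep_eq, cayStep_eq, cayStep_eq]
  have h : ∀ (c : Prop) [Decidable c] (a b : ℝ),
      (if c then a - b else (0:ℝ)) = (if c then a else 0) - (if c then b else 0) := by
    intros c _ a b; split <;> simp
  rw [h, h, h, h]; ring

lemma cayWalkSum_sub (f g : G × ↥Z2gens → ℝ) {u v : G} (w : (cayley Z2gens).Walk u v) :
    cayWalkSum Z2gens (fun p => f p - g p) w
      = cayWalkSum Z2gens f w - cayWalkSum Z2gens g w := by
  induction w with
  | nil => simp [cayWalkSum_nil]
  | cons h p ih => rw [cayWalkSum_cons, cayWalkSum_cons, cayWalkSum_cons, cayStep_sub, ih]; ring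

lemma abs_ite_le (c : Prop) [Decidable c] (a : ℝ) : |if c then a else 0| ≤ |a| := by
  split <;> simp [abs_nonneg]

lemma cayStep_abs_le (f : G × ↥Z2gens → ℝ) (u v : G) :
    |cayStep Z2gens f u v| ≤ |f (u, s1)| + |f (u, s2)| + |f (v, s1)| + |f (v, s2)| := by
  rw [cayStep_eq]
  have h1 := abs_ite_le (u * g1 = v) (f (u, s1))
  have h2 := abs_ite_le (u * g2 = v) (f (u, s2))
  have h3 := abs_ite_le (v * g1 = u) (f (v, s1))
  have h4 := abs_ite_le (v * g2 = u) (f (v, s2))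
  have t1 := abs_sub (((if u * g1 = v then f (u, s1) else 0) + (if u * g2 = v then f (u, s2) else 0)))
    (((if v * g1 = u then f (v, s1) else 0) + (if v * g2 = u then f (v, s2) else 0)))
  have t2 := abs_add_le ((if u * g1 = v then f (u, s1) else 0)) ((if u * g2 = v then f (u, s2) else 0))
  have t3 := abs_add_le ((if v * g1 = u then f (v, s1) else 0)) ((if v * g2 = u then f (v, s2) else 0))
  linarith

lemma list_sum_abs_le {K : ℝ} : ∀ (l : List ℝ), (∀ x ∈ l, |x| ≤ K) → |l.sum| ≤ l.length * K
  | [], _ => by simp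
  | a :: t, h => by
    have ht := list_sum_abs_le t (fun x hx => h x (List.mem_cons_of_mem _ hx))
    have ha := h a (List.mem_cons_self)
    have := abs_add_le a t.sum
    simp only [List.sum_cons, List.length_cons]
    push_cast
    nlinarith [abs_nonneg a, abs_nonneg t.sum]

lemma cayWalkSum_abs_le (f : G × ↥Z2gens → ℝ) {u v : G} (w : (cayley Z2gens).Walk u v)
    {K : ℝ} (h : ∀ d ∈ w.darts, |cayStep Z2gens f d.toProd.1 d.toProd.2| ≤ K) :
    |cayWalkSum Z2gens f w| ≤ w.length * K := by
  unfold cayWalkSum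
  have := list_sum_abs_le (w.darts.map (fun d => cayStep Z2gens f d.toProd.1 d.toProd.2))
    (by intro x hx; obtain ⟨d, hd, rfl⟩ := List.mem_map.1 hx; exact h d hd)
  simpa [Walk.length_darts] using this

end Stmt11

namespace Stmt11

def TT (M t : ℤ) : ℤ := max 0 (4*M - |t|)
noncomputable def Bb (M x : ℤ) : ℤ := ∑ s ∈ Finset.Icc (-(9*M)) (9*M), TT M s * TT M (x - s)
noncomputable def Gg (M x : ℤ) : ℤ := Bb M x - Bb M (x - 1)

lemma tt_nonneg (M t : ℤ) : 0 ≤ TT M t := le_max_left _ _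
lemma tt_lb (M t : ℤ) : 4*M - |t| ≤ TT M t := le_max_right _ _

lemma tt_le {M : ℤ} (hM : 1 ≤ M) (t : ℤ) : TT M t ≤ 4*M := by
  unfold TT
  rcases abs_cases t with ⟨h1,h1'⟩|⟨h1,h1'⟩ <;>
  rcases max_cases 0 (4*M - |t|) with ⟨h2,h2'⟩|⟨h2,h2'⟩ <;> omega

lemma tt_lip (M u v : ℤ) : |TT M u - TT M v| ≤ |u - v| := by
  unfold TT
  rcases abs_cases u with ⟨h1,h1'⟩|⟨h1,h1'⟩ <;>
  rcases abs_cases v with ⟨h2,h2'⟩|⟨h2,h2'⟩ <;>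
  rcases abs_cases (u-v) with ⟨h3,h3'⟩|⟨h3,h3'⟩ <;>
  rcases abs_cases (max 0 (4*M - |u|) - max 0 (4*M - |v|)) with ⟨h4,h4'⟩|⟨h4,h4'⟩ <;>
  rcases max_cases 0 (4*M - |u|) with ⟨h5,h5'⟩|⟨h5,h5'⟩ <;>
  rcases max_cases 0 (4*M - |v|) with ⟨h6,h6'⟩|⟨h6,h6'⟩ <;>
  omega

lemma tt_zero {M t : ℤ} (h : 4*M ≤ |t|) : TT M t = 0 := by
  unfold TT
  rcases abs_cases t with ⟨h1,h1'⟩|⟨h1,h1'⟩ <;>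
  rcases max_cases 0 (4*M - |t|) with ⟨h2,h2'⟩|⟨h2,h2'⟩ <;> omega

lemma tt_step_nonneg {M u : ℤ} (h : u ≤ 0) : TT M (u-1) ≤ TT M u := by
  unfold TT
  rcases abs_cases u with ⟨h1,h1'⟩|⟨h1,h1'⟩ <;>
  rcases abs_cases (u-1) with ⟨h2,h2'⟩|⟨h2,h2'⟩ <;>
  rcases max_cases 0 (4*M - |u|) with ⟨h3,h3'⟩|⟨h3,h3'⟩ <;>
  rcases max_cases 0 (4*M - |u-1|) with ⟨h4,h4'⟩|⟨h4,h4'⟩ <;> omega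

lemma card_J {M : ℤ} (hM : 1 ≤ M) :
    (((Finset.Icc (-(9*M)) (9*M)).card : ℤ)) = 18*M + 1 := by
  rw [Int.card_Icc]
  rw [Int.toNat_of_nonneg (by omega)]
  ring

lemma bb_nonneg (M x : ℤ) : 0 ≤ Bb M x :=
  Finset.sum_nonneg fun s _ => mul_nonneg (tt_nonneg _ _) (tt_nonneg _ _)

lemma bb_le {M : ℤ} (hM : 1 ≤ M) (x : ℤ) : Bb M x ≤ 400*M^3 := by
  have h1 : Bb M x ≤ ∑ s ∈ Finset.Icc (-(9*M)) (9*M), (4*M)*(4*M) :=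
    Finset.sum_le_sum fun s _ =>
      mul_le_mul (tt_le hM s) (tt_le hM _) (tt_nonneg _ _) (by omega)
  rw [Finset.sum_const, nsmul_eq_mul] at h1
  rw [card_J hM] at h1
  nlinarith

lemma bb_zero {M : ℤ} (hM : 1 ≤ M) {x : ℤ} (h : 8*M ≤ |x|) : Bb M x = 0 := by
  apply Finset.sum_eq_zero
  intro s hs
  rcases le_or_gt (4*M) |s| with hc | hc
  · rw [tt_zero hc, zero_mul]
  · rw [tt_zero (t := x - s), mul_zero]
    rcases abs_cases x with ⟨h1,h1'⟩|⟨h1,h1'⟩ <;>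
    rcases abs_cases s with ⟨h2,h2'⟩|⟨h2,h2'⟩ <;>
    rcases abs_cases (x-s) with ⟨h3,h3'⟩|⟨h3,h3'⟩ <;> omega

lemma bb_lip {M : ℤ} (hM : 1 ≤ M) (x y : ℤ) : |Bb M x - Bb M y| ≤ 80*M^2 * |x - y| := by
  unfold Bb
  rw [← Finset.sum_sub_distrib]
  have h1 : ∀ s ∈ Finset.Icc (-(9*M)) (9*M),
      |TT M s * TT M (x - s) - TT M s * TT M (y - s)| ≤ (4*M) * |x - y| := by
    intro s _
    rw [← mul_sub, abs_mul]
    have e1 : |TT M s| ≤ 4*M := by rw [abs_of_nonneg (tt_nonneg _ _)]; exact tt_le hM s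
    have e2 : |TT M (x - s) - TT M (y - s)| ≤ |x - y| := by
      have := tt_lip M (x - s) (y - s)
      have e3 : x - s - (y - s) = x - y := by ring
      rwa [e3] at this
    exact mul_le_mul e1 e2 (abs_nonneg _) (by omega)
  have h2 := (Finset.abs_sum_le_sum_abs _ _).trans (Finset.sum_le_sum h1)
  rw [Finset.sum_const, nsmul_eq_mul, card_J hM] at h2
  have h3 : (18*M+1) * (4*M * |x - y|) ≤ 80*M^2 * |x - y| := by
    nlinarith [mul_nonneg (show (0:ℤ) ≤ 8*M^2 - 4*M by nlinarith) (abs_nonneg (x - y))]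
  linarith

lemma gg_le {M : ℤ} (hM : 1 ≤ M) (x : ℤ) : |Gg M x| ≤ 80*M^2 := by
  have := bb_lip hM x (x-1)
  simpa [Gg] using this

lemma gg_zero {M : ℤ} (hM : 1 ≤ M) {x : ℤ} (h : 9*M ≤ |x|) : Gg M x = 0 := by
  have h1 : Bb M x = 0 := bb_zero hM (by omega)
  have h2 : Bb M (x-1) = 0 := by
    apply bb_zero hM
    rcases abs_cases x with ⟨e,e'⟩|⟨e,e'⟩ <;>
    rcases abs_cases (x-1) with ⟨e2,e2'⟩|⟨e2,e2'⟩ <;> omega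
  simp [Gg, h1, h2]

lemma bb_zero' {M : ℤ} (hM : 1 ≤ M) {x : ℤ} (h : 9*M ≤ |x|) : Bb M x = 0 :=
  bb_zero hM (by omega)

lemma sum_shift {M : ℤ} (hM : 1 ≤ M) (F Gf : ℤ → ℤ) (hF : ∀ t, 4*M ≤ |t| → F t = 0) :
    ∑ s ∈ Finset.Icc (-(9*M)) (9*M), F (s-1) * Gf s
      = ∑ s ∈ Finset.Icc (-(9*M)) (9*M), F s * Gf (s+1) := by
  have key : ∀ t ∈ Finset.Icc (-(9*M)) (9*M+1), t ∉ Finset.Icc (-(9*M)) (9*M) →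
      F (t-1) * Gf t = 0 := by
    intro t ht ht'
    simp only [Finset.mem_Icc] at ht ht'
    have : t = 9*M + 1 := by omega
    rw [this, hF (9*M+1-1) (by rw [abs_of_nonneg (by omega)]; omega), zero_mul]
  have e1 : ∑ s ∈ Finset.Icc (-(9*M)) (9*M), F (s-1) * Gf s
      = ∑ s ∈ Finset.Icc (-(9*M)) (9*M+1), F (s-1) * Gf s :=
    Finset.sum_subset (Finset.Icc_subset_Icc_right (by omega)) key
  have e2 : ∑ s ∈ Finset.Icc (-(9*M)+1) (9*M+1), F (s-1) * Gf s
      = ∑ s ∈ Finset.Icc (-(9*M)) (9*M+1), F (s-1) * Gf s := by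
    apply Finset.sum_subset (Finset.Icc_subset_Icc_left (by omega))
    intro t ht ht'
    simp only [Finset.mem_Icc] at ht ht'
    have : t = -(9*M) := by omega
    rw [this, hF (-(9*M)-1) (by rw [abs_of_nonpos (by omega)]; omega), zero_mul]
  have e3 : ∑ s ∈ Finset.Icc (-(9*M)+1) (9*M+1), F (s-1) * Gf s
      = ∑ s ∈ Finset.Icc (-(9*M)) (9*M), F s * Gf (s+1) := by
    rw [show Finset.Icc (-(9*M)+1) (9*M+1)
        = Finset.map (addRightEmbedding 1) (Finset.Icc (-(9*M)) (9*M)) by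
      rw [Finset.map_add_right_Icc]]
    rw [Finset.sum_map]
    apply Finset.sum_congr rfl
    intro t _
    simp [addRightEmbedding]
  rw [e1, ← e2, e3]

lemma gg_eq {M : ℤ} (hM : 1 ≤ M) (x : ℤ) :
    Gg M x = ∑ s ∈ Finset.Icc (-(9*M)) (9*M), (TT M s - TT M (s-1)) * TT M (x - s) := by
  have expand : ∑ s ∈ Finset.Icc (-(9*M)) (9*M), (TT M s - TT M (s-1)) * TT M (x - s)
      = Bb M x - ∑ s ∈ Finset.Icc (-(9*M)) (9*M), TT M (s-1) * TT M (x - s) := by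
    unfold Bb
    rw [← Finset.sum_sub_distrib]
    apply Finset.sum_congr rfl
    intro s _; ring
  rw [expand, sum_shift hM (TT M) (fun s => TT M (x - s)) (fun t ht => tt_zero ht)]
  have : ∑ s ∈ Finset.Icc (-(9*M)) (9*M), TT M s * TT M (x - (s+1))
      = Bb M (x-1) := by
    apply Finset.sum_congr rfl
    intro s _
    have : x - (s+1) = (x-1) - s := by ring
    rw [this]
  rw [this]
  rfl

lemma gg_lip {M : ℤ} (hM : 1 ≤ M) (x y : ℤ) : |Gg M x - Gg M y| ≤ 20*M * |x - y| := by
  rw [gg_eq hM x, gg_eq hM y, ← Finset.sum_sub_distrib]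
  have h1 : ∀ s ∈ Finset.Icc (-(9*M)) (9*M),
      |(TT M s - TT M (s-1)) * TT M (x - s) - (TT M s - TT M (s-1)) * TT M (y - s)|
        ≤ 1 * |x - y| := by
    intro s _
    rw [← mul_sub, abs_mul]
    have e1 : |TT M s - TT M (s-1)| ≤ 1 := by
      have := tt_lip M s (s-1); simpa using this
    have e2 : |TT M (x - s) - TT M (y - s)| ≤ |x - y| := by
      have := tt_lip M (x - s) (y - s)
      have e3 : x - s - (y - s) = x - y := by ring
      rwa [e3] at this
    exact mul_le_mul e1 e2 (abs_nonneg _) (by omega)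
  have h2 := (Finset.abs_sum_le_sum_abs _ _).trans (Finset.sum_le_sum h1)
  rw [Finset.sum_const, nsmul_eq_mul, card_J hM] at h2
  have h3 : (18*M+1) * (1 * |x - y|) ≤ 20*M * |x - y| := by
    nlinarith [mul_nonneg (show (0:ℤ) ≤ 2*M - 1 by omega) (abs_nonneg (x - y))]
  linarith

lemma bb_lb {M : ℤ} (hM : 1 ≤ M) {x : ℤ} (hx : |x| ≤ M) : 12*M^3 ≤ Bb M x := by
  have sub : Finset.Icc (-M) M ⊆ Finset.Icc (-(9*M)) (9*M) :=
    Finset.Icc_subset_Icc (by omega) (by omega)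
  have term : ∀ s ∈ Finset.Icc (-M) M, 6*M^2 ≤ TT M s * TT M (x - s) := by
    intro s hs
    simp only [Finset.mem_Icc] at hs
    have e1 : 3*M ≤ TT M s := by
      have := tt_lb M s
      rcases abs_cases s with ⟨h,h'⟩|⟨h,h'⟩ <;> omega
    have e2 : 2*M ≤ TT M (x - s) := by
      have := tt_lb M (x - s)
      rcases abs_cases x with ⟨h,h'⟩|⟨h,h'⟩ <;>
      rcases abs_cases (x - s) with ⟨h2,h2'⟩|⟨h2,h2'⟩ <;> omega
    nlinarith
  have h1 : ∑ s ∈ Finset.Icc (-M) M, (6*M^2 : ℤ) ≤ ∑ s ∈ Finset.Icc (-M) M, TT M s * TT M (x - s) :=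
    Finset.sum_le_sum term
  have h2 : ∑ s ∈ Finset.Icc (-M) M, TT M s * TT M (x - s) ≤ Bb M x :=
    Finset.sum_le_sum_of_subset_of_nonneg sub
      (fun s _ _ => mul_nonneg (tt_nonneg _ _) (tt_nonneg _ _))
  rw [Finset.sum_const, nsmul_eq_mul, Int.card_Icc, Int.toNat_of_nonneg (by omega)] at h1
  nlinarith

lemma gg_lb {M : ℤ} (hM : 1 ≤ M) : 2*M^2 ≤ Gg M (-(4*M)) := by
  rw [gg_eq hM]
  have nonneg : ∀ s ∈ Finset.Icc (-(9*M)) (9*M),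
      0 ≤ (TT M s - TT M (s-1)) * TT M (-(4*M) - s) := by
    intro s _
    rcases le_or_gt s 0 with hs | hs
    · exact mul_nonneg (by have := tt_step_nonneg (M := M) hs; omega) (tt_nonneg _ _)
    · rw [tt_zero (t := -(4*M) - s) (by rw [abs_of_nonpos (by omega)]; omega), mul_zero]
  have sub : Finset.Icc (-(3*M)) (-M) ⊆ Finset.Icc (-(9*M)) (9*M) :=
    Finset.Icc_subset_Icc (by omega) (by omega)
  have term : ∀ s ∈ Finset.Icc (-(3*M)) (-M), M ≤ (TT M s - TT M (s-1)) * TT M (-(4*M) - s) := by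
    intro s hs
    simp only [Finset.mem_Icc] at hs
    have e1 : TT M s = 4*M + s := by
      unfold TT
      rcases abs_cases s with ⟨h,h'⟩|⟨h,h'⟩ <;>
      rcases max_cases 0 (4*M - |s|) with ⟨h2,h2'⟩|⟨h2,h2'⟩ <;> omega
    have e2 : TT M (s-1) = 4*M + s - 1 := by
      unfold TT
      rcases abs_cases (s-1) with ⟨h,h'⟩|⟨h,h'⟩ <;>
      rcases max_cases 0 (4*M - |s-1|) with ⟨h2,h2'⟩|⟨h2,h2'⟩ <;> omega
    have e3 : TT M (-(4*M) - s) = -s := by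
      unfold TT
      rcases abs_cases (-(4*M) - s) with ⟨h,h'⟩|⟨h,h'⟩ <;>
      rcases max_cases 0 (4*M - |-(4*M) - s|) with ⟨h2,h2'⟩|⟨h2,h2'⟩ <;> omega
    rw [e1, e2, e3]
    have : (4*M + s - (4*M + s - 1)) * (-s) = -s := by ring
    rw [this]; omega
  have h1 : ∑ s ∈ Finset.Icc (-(3*M)) (-M), (M:ℤ)
      ≤ ∑ s ∈ Finset.Icc (-(3*M)) (-M), (TT M s - TT M (s-1)) * TT M (-(4*M) - s) :=
    Finset.sum_le_sum term
  have h2 : ∑ s ∈ Finset.Icc (-(3*M)) (-M), (TT M s - TT M (s-1)) * TT M (-(4*M) - s)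
      ≤ ∑ s ∈ Finset.Icc (-(9*M)) (9*M), (TT M s - TT M (s-1)) * TT M (-(4*M) - s) :=
    Finset.sum_le_sum_of_subset_of_nonneg sub (fun s hs _ => nonneg s hs)
  rw [Finset.sum_const, nsmul_eq_mul, Int.card_Icc, Int.toNat_of_nonneg (by omega)] at h1
  nlinarith

end Stmt11

namespace Stmt11

noncomputable def fM (M : ℤ) : G × ↥Z2gens → ℝ := fun p =>
  if (p.2 : G) = g1 then ((Bb M (X p.1) * Gg M (Y p.1) : ℤ) : ℝ)
  else ((-(Gg M (X p.1) * Bb M (Y p.1)) : ℤ) : ℝ)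

lemma fM_s1 (M : ℤ) (v : G) : fM M (v, s1) = ((Bb M (X v) * Gg M (Y v) : ℤ) : ℝ) := if_pos rfl

lemma fM_s2 (M : ℤ) (v : G) : fM M (v, s2) = ((-(Gg M (X v) * Bb M (Y v)) : ℤ) : ℝ) :=
  if_neg (fun h => g1_ne_g2 h.symm)

lemma bdry_eq (f : G × ↥Z2gens → ℝ) (v : G) :
    cayBdry Z2gens f v = (f (v * g1⁻¹, s1) - f (v, s1)) + (f (v * g2⁻¹, s2) - f (v, s2)) := by
  unfold cayBdry
  rw [sum_pair]
  rfl

lemma fM_closed (M : ℤ) (v : G) : cayBdry Z2gens (fM M) v = 0 := by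
  rw [bdry_eq, fM_s1, fM_s1, fM_s2, fM_s2]
  simp only [X_mul, Y_mul, X_inv, Y_inv, X_g1, Y_g1, X_g2, Y_g2]
  have e1 : X v + -(1:ℤ) = X v - 1 := by ring
  have e2 : Y v + -(1:ℤ) = Y v - 1 := by ring
  have e3 : X v + -(0:ℤ) = X v := by ring
  have e4 : Y v + -(0:ℤ) = Y v := by ring
  rw [e1, e2, e3, e4]
  unfold Gg
  push_cast
  ring

noncomputable def box (r : ℤ) : Finset G :=
  ((Finset.Icc (-r) r) ×ˢ (Finset.Icc (-r) r)).map (Multiplicative.ofAdd).toEmbedding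

lemma mem_box {r : ℤ} {v : G} : v ∈ box r ↔ |X v| ≤ r ∧ |Y v| ≤ r := by
  unfold box
  simp only [Finset.mem_map, Finset.mem_product, Finset.mem_Icc, Equiv.coe_toEmbedding]
  constructor
  · rintro ⟨a, ⟨⟨h1, h2⟩, h3, h4⟩, rfl⟩
    simp only [X_ofAdd, Y_ofAdd]
    constructor <;> [rw [abs_le]; rw [abs_le]] <;> exact ⟨by omega, by omega⟩
  · rintro ⟨h1, h2⟩
    rw [abs_le] at h1 h2
    exact ⟨Multiplicative.toAdd v, ⟨⟨h1.1, h1.2⟩, h2.1, h2.2⟩, rfl⟩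

lemma card_box {r : ℤ} (hr : 0 ≤ r) : ((box r).card : ℤ) = (2*r+1)^2 := by
  unfold box
  rw [Finset.card_map, Finset.card_product, Int.card_Icc]
  rw [Nat.cast_mul, Int.toNat_of_nonneg (show (0:ℤ) ≤ r + 1 - -r by omega)]
  ring

lemma fM_supp_mem {M : ℤ} (hM : 1 ≤ M) {p : G × ↥Z2gens} (hp : fM M p ≠ 0) :
    |X p.1| ≤ 9*M ∧ |Y p.1| ≤ 9*M := by
  unfold fM at hp
  split at hp
  · rw [Int.cast_ne_zero] at hp
    constructor
    · by_contra hc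
      exact hp (by rw [bb_zero' hM (by omega)]; ring)
    · by_contra hc
      exact hp (by rw [gg_zero hM (by omega)]; ring)
  · rw [Int.cast_ne_zero] at hp
    constructor
    · by_contra hc
      exact hp (by rw [gg_zero hM (by omega)]; ring)
    · by_contra hc
      exact hp (by rw [bb_zero' hM (by omega)]; ring)

lemma fM_supp_finite {M : ℤ} (hM : 1 ≤ M) : (Function.support (fM M)).Finite := by
  apply Set.Finite.subset (((box (9*M)) ×ˢ (Finset.univ : Finset ↥Z2gens)).finite_toSet)
  intro p hp
  simp only [Finset.coe_product, Set.mem_prod, Finset.mem_coe, Finset.coe_univ, Set.mem_univ,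
    and_true]
  exact mem_box.2 (fM_supp_mem hM hp)

lemma prod_diff1 {M D x y x0 y0 : ℤ} (hM : 1 ≤ M) (hD : 1 ≤ D)
    (hx : |x - x0| ≤ 2*D) (hy : |y - y0| ≤ 2*D) :
    |Bb M x * Gg M y - Bb M x0 * Gg M y0| ≤ 30000 * D * M^4 := by
  have decomp : Bb M x * Gg M y - Bb M x0 * Gg M y0
      = (Bb M x - Bb M x0) * Gg M y + Bb M x0 * (Gg M y - Gg M y0) := by ring
  have t1 : |(Bb M x - Bb M x0) * Gg M y| ≤ (80*M^2 * (2*D)) * (80*M^2) := by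
    rw [abs_mul]
    apply mul_le_mul _ (gg_le hM y) (abs_nonneg _) (by positivity)
    exact (bb_lip hM x x0).trans (by nlinarith [abs_nonneg (x - x0), sq_nonneg M])
  have t2 : |Bb M x0 * (Gg M y - Gg M y0)| ≤ (400*M^3) * (20*M * (2*D)) := by
    rw [abs_mul]
    apply mul_le_mul _ _ (abs_nonneg _) (by positivity)
    · rw [abs_of_nonneg (bb_nonneg _ _)]; exact bb_le hM x0
    · exact (gg_lip hM y y0).trans (by nlinarith [abs_nonneg (y - y0)])
  calc |Bb M x * Gg M y - Bb M x0 * Gg M y0|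
      ≤ |(Bb M x - Bb M x0) * Gg M y| + |Bb M x0 * (Gg M y - Gg M y0)| := by
        rw [decomp]; exact abs_add_le _ _
    _ ≤ (80*M^2 * (2*D)) * (80*M^2) + (400*M^3) * (20*M * (2*D)) := by linarith
    _ ≤ 30000 * D * M^4 := by
        have h0 : (0:ℤ) ≤ D * M^4 := by positivity
        nlinarith [h0]

lemma prod_diff2 {M D x y x0 y0 : ℤ} (hM : 1 ≤ M) (hD : 1 ≤ D)
    (hx : |x - x0| ≤ 2*D) (hy : |y - y0| ≤ 2*D) :
    |(-(Gg M x * Bb M y)) - (-(Gg M x0 * Bb M y0))| ≤ 30000 * D * M^4 := by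
  have decomp : (-(Gg M x * Bb M y)) - (-(Gg M x0 * Bb M y0))
      = (Gg M x0 - Gg M x) * Bb M y + Gg M x0 * (Bb M y0 - Bb M y) := by ring
  have t1 : |(Gg M x0 - Gg M x) * Bb M y| ≤ (20*M * (2*D)) * (400*M^3) := by
    rw [abs_mul]
    apply mul_le_mul _ _ (abs_nonneg _) (by positivity)
    · have := gg_lip hM x0 x
      exact this.trans (by nlinarith [abs_nonneg (x0 - x), abs_sub_comm x x0])
    · rw [abs_of_nonneg (bb_nonneg _ _)]; exact bb_le hM y
  have t2 : |Gg M x0 * (Bb M y0 - Bb M y)| ≤ (80*M^2) * (80*M^2 * (2*D)) := by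
    rw [abs_mul]
    apply mul_le_mul (gg_le hM x0) _ (abs_nonneg _) (by positivity)
    have := bb_lip hM y0 y
    exact this.trans (by nlinarith [abs_nonneg (y0 - y), abs_sub_comm y y0])
  calc |(-(Gg M x * Bb M y)) - (-(Gg M x0 * Bb M y0))|
      ≤ |(Gg M x0 - Gg M x) * Bb M y| + |Gg M x0 * (Bb M y0 - Bb M y)| := by
        rw [decomp]; exact abs_add_le _ _
    _ ≤ (20*M * (2*D)) * (400*M^3) + (80*M^2) * (80*M^2 * (2*D)) := by linarith
    _ ≤ 30000 * D * M^4 := by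
        have h0 : (0:ℤ) ≤ D * M^4 := by positivity
        nlinarith [h0]

end Stmt11

namespace Stmt11
open SimpleGraph

lemma drift {u v : G} (w : (cayley Z2gens).Walk u v) :
    ∀ p ∈ w.support, |X p - X u| ≤ (w.length : ℤ) ∧ |Y p - Y u| ≤ (w.length : ℤ) := by
  induction w with
  | nil =>
    intro p hp
    rw [Walk.support_nil, List.mem_singleton] at hp
    subst hp; simp
  | @cons u x v h q ih =>
    intro p hp
    rw [Walk.support_cons, List.mem_cons] at hp
    rw [Walk.length_cons]
    rcases hp with rfl | hp
    · constructor <;> · rw [sub_self, abs_zero]; positivity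
    · obtain ⟨hx, hy⟩ := ih p hp
      have hstep := adj_unit_step h
      have t1 : |X p - X u| ≤ |X p - X x| + |X x - X u| := by
        have := abs_add_le (X p - X x) (X x - X u); simpa using this
      have t2 : |Y p - Y u| ≤ |Y p - Y x| + |Y x - Y u| := by
        have := abs_add_le (Y p - Y x) (Y x - Y u); simpa using this
      have n1 := abs_nonneg (X x - X u)
      have n2 := abs_nonneg (Y x - Y u)
      omega

lemma grad_psi_s1 (a0 b0 : ℝ) (p : G) :
    grad (fun q => a0 * (X q : ℝ) + b0 * (Y q : ℝ)) (p, s1) = a0 := by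
  unfold grad
  show a0 * ((X (p * g1) : ℤ) : ℝ) + b0 * ((Y (p * g1) : ℤ) : ℝ)
      - (a0 * (X p : ℝ) + b0 * (Y p : ℝ)) = a0
  simp only [X_mul, Y_mul, X_g1, Y_g1]
  push_cast
  ring

lemma grad_psi_s2 (a0 b0 : ℝ) (p : G) :
    grad (fun q => a0 * (X q : ℝ) + b0 * (Y q : ℝ)) (p, s2) = b0 := by
  unfold grad
  show a0 * ((X (p * g2) : ℤ) : ℝ) + b0 * ((Y (p * g2) : ℤ) : ℝ)
      - (a0 * (X p : ℝ) + b0 * (Y p : ℝ)) = b0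
  simp only [X_mul, Y_mul, X_g2, Y_g2]
  push_cast
  ring

lemma walk_bound {M : ℤ} (hM : 1 ≤ M) {D : ℕ} (hD : 1 ≤ D) {v0 : G}
    (w : (cayley Z2gens).Walk v0 v0) (hlen : w.length ≤ D) :
    |cayWalkSum Z2gens (fM M) w| ≤ 120000 * (D:ℝ)^2 * (M:ℝ)^4 := by
  set a0 : ℤ := Bb M (X v0) * Gg M (Y v0) with ha0
  set b0 : ℤ := -(Gg M (X v0) * Bb M (Y v0)) with hb0
  set ψ : G → ℝ := fun q => (a0 : ℝ) * (X q : ℝ) + (b0 : ℝ) * (Y q : ℝ) with hψ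
  have tele : cayWalkSum Z2gens (grad ψ) w = 0 := by rw [cayWalkSum_grad]; ring
  have split : cayWalkSum Z2gens (fM M) w
      = cayWalkSum Z2gens (fun p => fM M p - grad ψ p) w := by
    rw [cayWalkSum_sub, tele]; ring
  rw [split]
  have key : ∀ p : G, |X p - X v0| ≤ 2*(D:ℤ) → |Y p - Y v0| ≤ 2*(D:ℤ) →
      (|fM M (p, s1) - grad ψ (p, s1)| ≤ ((30000 * (D:ℤ) * M^4 : ℤ) : ℝ)
      ∧ |fM M (p, s2) - grad ψ (p, s2)| ≤ ((30000 * (D:ℤ) * M^4 : ℤ) : ℝ)) := by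
    intro p hx hy
    constructor
    · rw [fM_s1, hψ, grad_psi_s1]
      rw [show ((Bb M (X p) * Gg M (Y p) : ℤ) : ℝ) - (a0 : ℝ)
          = ((Bb M (X p) * Gg M (Y p) - a0 : ℤ) : ℝ) by push_cast; ring]
      rw [← Int.cast_abs]
      have := prod_diff1 (x := X p) (y := Y p) (x0 := X v0) (y0 := Y v0) hM
        (by exact_mod_cast hD) hx hy
      rw [ha0]
      exact_mod_cast this
    · rw [fM_s2, hψ, grad_psi_s2]
      rw [show ((-(Gg M (X p) * Bb M (Y p)) : ℤ) : ℝ) - (b0 : ℝ)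
          = ((-(Gg M (X p) * Bb M (Y p)) - b0 : ℤ) : ℝ) by push_cast; ring]
      rw [← Int.cast_abs]
      have := prod_diff2 (x := X p) (y := Y p) (x0 := X v0) (y0 := Y v0) hM
        (by exact_mod_cast hD) hx hy
      rw [hb0]
      exact_mod_cast this
  have dartbound : ∀ d ∈ w.darts,
      |cayStep Z2gens (fun p => fM M p - grad ψ p) d.toProd.1 d.toProd.2|
        ≤ 4 * ((30000 * (D:ℤ) * M^4 : ℤ) : ℝ) := by
    intro d hd
    have h1 := drift w d.toProd.1 (w.dart_fst_mem_support_of_mem_darts hd)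
    have h2 := drift w d.toProd.2 (w.dart_snd_mem_support_of_mem_darts hd)
    have hl : (w.length : ℤ) ≤ 2*(D:ℤ) := by
      have : (w.length:ℤ) ≤ (D:ℤ) := by exact_mod_cast hlen
      omega
    obtain ⟨k1, k2⟩ := key d.toProd.1 (le_trans h1.1 hl) (le_trans h1.2 hl)
    obtain ⟨k3, k4⟩ := key d.toProd.2 (le_trans h2.1 hl) (le_trans h2.2 hl)
    have hs := cayStep_abs_le (fun p => fM M p - grad ψ p) d.toProd.1 d.toProd.2
    linarith
  have := cayWalkSum_abs_le (fun p => fM M p - grad ψ p) w dartbound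
  have hlen' : (w.length : ℝ) ≤ (D : ℝ) := by exact_mod_cast hlen
  have hK : (0:ℝ) ≤ 4 * ((30000 * (D:ℤ) * M^4 : ℤ) : ℝ) := by positivity
  calc |cayWalkSum Z2gens (fun p => fM M p - grad ψ p) w|
      ≤ (w.length : ℝ) * (4 * ((30000 * (D:ℤ) * M^4 : ℤ) : ℝ)) := this
    _ ≤ (D : ℝ) * (4 * ((30000 * (D:ℤ) * M^4 : ℤ) : ℝ)) :=
        mul_le_mul_of_nonneg_right hlen' hK
    _ = 120000 * (D:ℝ)^2 * (M:ℝ)^4 := by push_cast; ring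

end Stmt11

namespace Stmt11
open SimpleGraph

def dirs : Finset G := {g1, g2, g1⁻¹, g2⁻¹}

def listsUpTo : ℕ → Finset (List G)
  | 0 => {[]}
  | n+1 => insert [] ((dirs ×ˢ listsUpTo n).image (fun p => p.1 :: p.2))

lemma mem_listsUpTo {n : ℕ} {l : List G} (h1 : l.length ≤ n) (h2 : ∀ x ∈ l, x ∈ dirs) :
    l ∈ listsUpTo n := by
  induction n generalizing l with
  | zero =>
    rw [List.length_eq_zero_iff.1 (Nat.le_zero.1 h1)]
    simp [listsUpTo]
  | succ n ih =>
    cases l with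
    | nil => simp [listsUpTo]
    | cons a t =>
      unfold listsUpTo
      apply Finset.mem_insert_of_mem
      apply Finset.mem_image.2
      refine ⟨(a, t), Finset.mem_product.2 ⟨h2 a (List.mem_cons_self), ?_⟩, rfl⟩
      exact ih (by simpa using h1) (fun x hx => h2 x (List.mem_cons_of_mem _ hx))

lemma card_listsUpTo (n : ℕ) : (listsUpTo n).card ≤ 5^(n+1) := by
  induction n with
  | zero => simp [listsUpTo]
  | succ n ih =>
    unfold listsUpTo
    have h1 := Finset.card_insert_le ([] : List G) ((dirs ×ˢ listsUpTo n).image (fun p => p.1 :: p.2))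
    have h2 := Finset.card_image_le (s := dirs ×ˢ listsUpTo n) (f := fun p : G × List G => p.1 :: p.2)
    rw [Finset.card_product] at h2
    have h3 : dirs.card ≤ 4 := by
      unfold dirs
      apply le_trans (Finset.card_insert_le _ _)
      apply Nat.succ_le_succ
      apply le_trans (Finset.card_insert_le _ _)
      apply Nat.succ_le_succ
      apply le_trans (Finset.card_insert_le _ _)
      simp
    calc (insert [] ((dirs ×ˢ listsUpTo n).image (fun p => p.1 :: p.2))).card
        ≤ ((dirs ×ˢ listsUpTo n).image (fun p => p.1 :: p.2)).card + 1 := h1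
      _ ≤ dirs.card * (listsUpTo n).card + 1 := by omega
      _ ≤ 4 * 5^(n+1) + 1 := by
          have := Nat.mul_le_mul h3 ih
          omega
      _ ≤ 5^(n+2) := by
          have : (5:ℕ)^(n+2) = 5 * 5^(n+1) := by ring
          have h5 : 1 ≤ (5:ℕ)^(n+1) := Nat.one_le_pow _ _ (by norm_num)
          omega

def stepsOf {u v : G} (w : (cayley Z2gens).Walk u v) : List G :=
  w.darts.map (fun d => (d.toProd.1)⁻¹ * d.toProd.2)

def prodsFrom : G → List G → List (G × G)
  | _, [] => []
  | u, a :: t => (u, u * a) :: prodsFrom (u * a) t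

lemma darts_eq_prodsFrom {u v : G} (w : (cayley Z2gens).Walk u v) :
    w.darts.map Dart.toProd = prodsFrom u (stepsOf w) := by
  induction w with
  | nil => rfl
  | @cons u x v h q ih =>
    show (u, x) :: q.darts.map Dart.toProd
        = prodsFrom u ((u⁻¹ * x) :: stepsOf q)
    unfold prodsFrom
    rw [mul_inv_cancel_left, ih]

lemma edges_determined {u v : G} (w : (cayley Z2gens).Walk u v) :
    w.edges = (prodsFrom u (stepsOf w)).map (fun p => Sym2.mk p.1 p.2) := by
  show w.darts.map Dart.edge = _
  rw [← darts_eq_prodsFrom, List.map_map]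
  rfl

lemma stepsOf_length {u v : G} (w : (cayley Z2gens).Walk u v) :
    (stepsOf w).length = w.length := by
  unfold stepsOf
  rw [List.length_map, Walk.length_darts]

lemma stepsOf_mem_dirs {u v : G} (w : (cayley Z2gens).Walk u v) :
    ∀ x ∈ stepsOf w, x ∈ dirs := by
  intro x hx
  obtain ⟨d, hd, rfl⟩ := List.mem_map.1 hx
  have hadj : (cayley Z2gens).Adj d.toProd.1 d.toProd.2 := d.adj
  rcases adj_cases hadj with hc | hc | hc | hc
  · rw [hc, inv_mul_cancel_left]; simp [dirs]
  · rw [hc, inv_mul_cancel_left]; simp [dirs]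
  · rw [hc]
    have e : (d.toProd.2 * g1)⁻¹ * d.toProd.2 = g1⁻¹ := by group
    rw [e]; simp [dirs]
  · rw [hc]
    have e : (d.toProd.2 * g2)⁻¹ * d.toProd.2 = g2⁻¹ := by group
    rw [e]; simp [dirs]

noncomputable def Phi (D : ℕ) (c : Face (cayley Z2gens) D) : G × List G :=
  (c.2.choose, stepsOf c.2.choose_spec.choose)

lemma face_val_eq (D : ℕ) (f : G × ↥Z2gens → ℝ) (c : Face (cayley Z2gens) D) :
    cayFaceVal Z2gens D f c = cayWalkSum Z2gens f c.2.choose_spec.choose := rfl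

lemma face_spec (D : ℕ) (c : Face (cayley Z2gens) D) :
    c.2.choose_spec.choose.IsCycle ∧ c.2.choose_spec.choose.length ≤ D ∧
      {e | e ∈ c.2.choose_spec.choose.edges} = c.1 :=
  c.2.choose_spec.choose_spec

lemma Phi_injective (D : ℕ) : Function.Injective (Phi D) := by
  intro c c' h
  apply Subtype.ext
  have key : ∀ (a : Face (cayley Z2gens) D),
      a.1 = {e | e ∈ (prodsFrom (Phi D a).1 (Phi D a).2).map (fun p => Sym2.mk p.1 p.2)} := by
    intro a
    rw [← (face_spec D a).2.2, edges_determined]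
    rfl
  rw [key c, key c', h]

end Stmt11

namespace Stmt11
open SimpleGraph

lemma face_nonzero_mem {M : ℤ} (hM : 1 ≤ M) {D : ℕ} {c : Face (cayley Z2gens) D}
    (hc : cayFaceVal Z2gens D (fM M) c ≠ 0) :
    Phi D c ∈ (box (9*M + (D:ℤ))) ×ˢ listsUpTo D := by
  have spec := face_spec D c
  set v0 := c.2.choose with hv0
  set w := c.2.choose_spec.choose with hw
  rw [face_val_eq] at hc
  have hdart : ∃ d ∈ w.darts, cayStep Z2gens (fM M) d.toProd.1 d.toProd.2 ≠ 0 := by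
    by_contra hall
    push_neg at hall
    apply hc
    unfold cayWalkSum
    apply List.sum_eq_zero
    intro x hx
    obtain ⟨d, hd, rfl⟩ := List.mem_map.1 hx
    exact hall d hd
  obtain ⟨d, hd, hne⟩ := hdart
  have hf : fM M (d.toProd.1, s1) ≠ 0 ∨ fM M (d.toProd.1, s2) ≠ 0 ∨
      fM M (d.toProd.2, s1) ≠ 0 ∨ fM M (d.toProd.2, s2) ≠ 0 := by
    by_contra hz
    push_neg at hz
    obtain ⟨z1, z2, z3, z4⟩ := hz
    exact hne (by rw [cayStep_eq, z1, z2, z3, z4]; simp)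
  have hp : ∃ p ∈ w.support, |X p| ≤ 9*M ∧ |Y p| ≤ 9*M := by
    rcases hf with h | h | h | h
    · exact ⟨d.toProd.1, w.dart_fst_mem_support_of_mem_darts hd, fM_supp_mem hM h⟩
    · exact ⟨d.toProd.1, w.dart_fst_mem_support_of_mem_darts hd, fM_supp_mem hM h⟩
    · exact ⟨d.toProd.2, w.dart_snd_mem_support_of_mem_darts hd, fM_supp_mem hM h⟩
    · exact ⟨d.toProd.2, w.dart_snd_mem_support_of_mem_darts hd, fM_supp_mem hM h⟩
  obtain ⟨p, hps, hpx, hpy⟩ := hp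
  have hdr := drift w p hps
  have hlen : (w.length : ℤ) ≤ (D : ℤ) := by exact_mod_cast spec.2.1
  have hdx : |X p - X v0| ≤ (w.length : ℤ) := hdr.1
  have hdy : |Y p - Y v0| ≤ (w.length : ℤ) := hdr.2
  apply Finset.mem_product.2
  constructor
  · apply mem_box.2
    show |X v0| ≤ 9*M + (D:ℤ) ∧ |Y v0| ≤ 9*M + (D:ℤ)
    constructor
    · have := abs_add_le (X v0 - X p) (X p)
      have h2 : |X v0 - X p| = |X p - X v0| := abs_sub_comm _ _
      have h3 : X v0 - X p + X p = X v0 := by ring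
      rw [h3, h2] at this
      omega
    · have := abs_add_le (Y v0 - Y p) (Y p)
      have h2 : |Y v0 - Y p| = |Y p - Y v0| := abs_sub_comm _ _
      have h3 : Y v0 - Y p + Y p = Y v0 := by ring
      rw [h3, h2] at this
      omega
  · exact mem_listsUpTo (show (stepsOf w).length ≤ D by rw [stepsOf_length]; exact spec.2.1)
      (stepsOf_mem_dirs w)

lemma summable_fM_sq {M : ℤ} (hM : 1 ≤ M) : Summable (fun e : G × ↥Z2gens => fM M e ^ 2) := by
  apply summable_of_ne_finset_zero (s := (box (9*M)) ×ˢ (Finset.univ : Finset ↥Z2gens))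
  intro p hp
  have : fM M p = 0 := by
    by_contra hne
    apply hp
    exact Finset.mem_product.2 ⟨mem_box.2 (fM_supp_mem hM hne), Finset.mem_univ _⟩
  rw [this]; ring

lemma edge_energy_lb {M : ℤ} (hM : 1 ≤ M) :
    ((1152 * M^11 : ℤ) : ℝ) ≤ ∑' e : G × ↥Z2gens, fM M e ^ 2 := by
  set Efin : Finset (G × ↥Z2gens) :=
    (Finset.Icc (-M) M).image (fun x => ((Multiplicative.ofAdd (x, -(4*M)) : G), s1)) with hE
  have hinj : ∀ x ∈ Finset.Icc (-M) M, ∀ y ∈ Finset.Icc (-M) M,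
      ((Multiplicative.ofAdd (x, -(4*M)) : G), s1) = ((Multiplicative.ofAdd (y, -(4*M)) : G), s1)
        → x = y := by
    intro x _ y _ hxy
    have := congrArg (fun q => X q.1) hxy
    simpa using this
  have hsum : ∑ e ∈ Efin, fM M e ^ 2
      = ∑ x ∈ Finset.Icc (-M) M, fM M ((Multiplicative.ofAdd (x, -(4*M)) : G), s1) ^ 2 :=
    Finset.sum_image hinj
  have hterm : ∀ x ∈ Finset.Icc (-M) M,
      ((576 * M^10 : ℤ) : ℝ) ≤ fM M ((Multiplicative.ofAdd (x, -(4*M)) : G), s1) ^ 2 := by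
    intro x hx
    rw [Finset.mem_Icc] at hx
    rw [fM_s1]
    have hX : X (Multiplicative.ofAdd (x, -(4*M)) : G) = x := rfl
    have hY : Y (Multiplicative.ofAdd (x, -(4*M)) : G) = -(4*M) := rfl
    rw [hX, hY]
    have hb : 12*M^3 ≤ Bb M x := bb_lb hM (by rw [abs_le]; omega)
    have hg : 2*M^2 ≤ Gg M (-(4*M)) := gg_lb hM
    have hM0 : (0:ℤ) ≤ M := by omega
    have h24 : (0:ℤ) ≤ 24*M^5 := by positivity
    have h1 : 24*M^5 ≤ Bb M x * Gg M (-(4*M)) := by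
      have h1' := mul_le_mul hb hg (by positivity) (le_trans (by positivity) hb)
      nlinarith [h1']
    have hint : (576 * M^10 : ℤ) ≤ (Bb M x * Gg M (-(4*M)))^2 := by
      nlinarith [mul_le_mul h1 h1 h24 (le_trans h24 h1)]
    calc ((576 * M^10 : ℤ) : ℝ) ≤ (((Bb M x * Gg M (-(4*M)))^2 : ℤ) : ℝ) := by exact_mod_cast hint
      _ = ((Bb M x * Gg M (-(4*M)) : ℤ) : ℝ) ^ 2 := by push_cast; ring
  have hlow : ((1152 * M^11 : ℤ) : ℝ) ≤ ∑ e ∈ Efin, fM M e ^ 2 := by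
    rw [hsum]
    have h1 : ∑ x ∈ Finset.Icc (-M) M, ((576 * M^10 : ℤ) : ℝ)
        ≤ ∑ x ∈ Finset.Icc (-M) M, fM M ((Multiplicative.ofAdd (x, -(4*M)) : G), s1) ^ 2 :=
      Finset.sum_le_sum hterm
    rw [Finset.sum_const, nsmul_eq_mul, Int.card_Icc] at h1
    have hcast : (((M + 1 - -M).toNat : ℕ) : ℝ) = 2*(M:ℝ) + 1 := by
      rw [← Int.cast_natCast, Int.toNat_of_nonneg (by omega)]
      push_cast; ring
    rw [hcast] at h1
    refine le_trans ?_ h1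
    have hMr : (1:ℝ) ≤ (M:ℝ) := by exact_mod_cast hM
    push_cast
    nlinarith [pow_nonneg (le_trans zero_le_one hMr) 10, pow_nonneg (le_trans zero_le_one hMr) 11]
  refine le_trans hlow ?_
  apply Summable.sum_le_tsum Efin (fun e _ => sq_nonneg _) (summable_fM_sq hM)

end Stmt11

namespace Stmt11
open SimpleGraph

lemma face_energy {M : ℤ} (hM : 1 ≤ M) {D : ℕ} (hD : 1 ≤ D) :
    ∑' c : Face (cayley Z2gens) D, cayFaceVal Z2gens D (fM M) c ^ 2
      ≤ (((box (9*M + (D:ℤ))).card : ℝ)) * ((5:ℝ)^(D+1))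
          * (120000 * (D:ℝ)^2 * (M:ℝ)^4)^2 := by
  classical
  set B : ℝ := 120000 * (D:ℝ)^2 * (M:ℝ)^4 with hB
  have hB0 : 0 ≤ B := by positivity
  set A : Finset (G × List G) := (box (9*M + (D:ℤ))) ×ˢ listsUpTo D with hA
  have hsub : {c : Face (cayley Z2gens) D | cayFaceVal Z2gens D (fM M) c ≠ 0}
      ⊆ Phi D ⁻¹' ↑A := fun c hc => face_nonzero_mem hM hc
  have hfin : {c : Face (cayley Z2gens) D | cayFaceVal Z2gens D (fM M) c ≠ 0}.Finite :=
    Set.Finite.subset (Set.Finite.preimage ((Phi_injective D).injOn) A.finite_toSet) hsub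
  have htsum : ∑' c : Face (cayley Z2gens) D, cayFaceVal Z2gens D (fM M) c ^ 2
      = ∑ c ∈ hfin.toFinset, cayFaceVal Z2gens D (fM M) c ^ 2 := by
    apply tsum_eq_sum
    intro c hc
    rw [Set.Finite.mem_toFinset] at hc
    simp only [Set.mem_setOf_eq, not_not] at hc
    rw [hc]; ring
  rw [htsum]
  have hbound : ∀ c ∈ hfin.toFinset, cayFaceVal Z2gens D (fM M) c ^ 2 ≤ B^2 := by
    intro c _
    have spec := face_spec D c
    have hw := walk_bound hM hD c.2.choose_spec.choose spec.2.1
    rw [face_val_eq, ← sq_abs]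
    rw [hB]
    exact pow_le_pow_left₀ (abs_nonneg _) hw 2
  have hsum := Finset.sum_le_card_nsmul hfin.toFinset _ (B^2) hbound
  rw [nsmul_eq_mul] at hsum
  have hcard : hfin.toFinset.card ≤ A.card := by
    apply Finset.card_le_card_of_injOn (Phi D)
    · intro c hc
      rw [Finset.mem_coe, Set.Finite.mem_toFinset] at hc
      exact face_nonzero_mem hM hc
    · exact (Phi_injective D).injOn
  have hcard2 : (A.card : ℝ) ≤ ((box (9*M + (D:ℤ))).card : ℝ) * (5:ℝ)^(D+1) := by
    rw [hA, Finset.card_product]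
    have h5 : (listsUpTo D).card ≤ 5^(D+1) := card_listsUpTo D
    have h6 : (((box (9*M + (D:ℤ))).card * (listsUpTo D).card : ℕ) : ℝ)
        ≤ (((box (9*M + (D:ℤ))).card * 5^(D+1) : ℕ) : ℝ) := by
      exact_mod_cast Nat.mul_le_mul_left (box (9*M + (D:ℤ))).card h5
    refine h6.trans_eq ?_
    push_cast; ring
  calc ∑ c ∈ hfin.toFinset, cayFaceVal Z2gens D (fM M) c ^ 2
      ≤ (hfin.toFinset.card : ℝ) * B^2 := hsum
    _ ≤ (A.card : ℝ) * B^2 := by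
        apply mul_le_mul_of_nonneg_right _ (by positivity)
        exact_mod_cast hcard
    _ ≤ ((box (9*M + (D:ℤ))).card : ℝ) * (5:ℝ)^(D+1) * B^2 :=
        mul_le_mul_of_nonneg_right hcard2 (by positivity)

lemma main2 (D : ℕ) (hD : 3 ≤ D) (ε : ℝ) (hε : 0 < ε) :
    ∃ f : G × ↥Z2gens → ℝ,
      (Function.support f).Finite ∧ (∀ v, cayBdry Z2gens f v = 0) ∧
      0 < ∑' e : G × ↥Z2gens, f e ^ 2 ∧
      ∑' c : Face (cayley Z2gens) D, cayFaceVal Z2gens D f c ^ 2 <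
        ε * ∑' e : G × ↥Z2gens, f e ^ 2 := by
  have hD1 : 1 ≤ D := by omega
  have hDr : (3:ℝ) ≤ (D:ℝ) := by exact_mod_cast hD
  set CD : ℝ := 441*(D:ℝ)^6 * 5^(D+1) * 120000^2 with hCD
  have hCD0 : 0 < CD := by positivity
  set M : ℤ := max 1 (⌈CD/ε⌉ + 1) with hMdef
  have hM : 1 ≤ M := le_max_left _ _
  have hMr : (1:ℝ) ≤ (M:ℝ) := by exact_mod_cast hM
  have hM0 : (0:ℝ) < (M:ℝ) := by linarith
  have hεM : CD < ε * (M:ℝ) := by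
    have h1 : CD/ε ≤ (⌈CD/ε⌉ : ℝ) := Int.le_ceil _
    have h2 : ((⌈CD/ε⌉ + 1 : ℤ) : ℝ) ≤ (M:ℝ) := by
      exact_mod_cast le_max_right (1:ℤ) (⌈CD/ε⌉ + 1)
    push_cast at h2
    have h3 : CD/ε < (M:ℝ) := by linarith
    have := (div_lt_iff₀ hε).1 h3
    linarith [this]
  refine ⟨fM M, fM_supp_finite hM, fM_closed M, ?_, ?_⟩
  · have hlb := edge_energy_lb hM
    have hpos : (0:ℝ) < ((1152 * M^11 : ℤ) : ℝ) := by
      have : (0:ℤ) < 1152 * M^11 := by positivity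
      exact_mod_cast this
    linarith
  · have hface := face_energy hM hD1
    have hlb := edge_energy_lb hM
    have hcardbox : (((box (9*M + (D:ℤ))).card : ℝ)) = (2*(9*(M:ℝ)+(D:ℝ))+1)^2 := by
      have := card_box (r := 9*M + (D:ℤ)) (by omega)
      have h2 : (((box (9*M + (D:ℤ))).card : ℤ) : ℝ) = ((2*(9*M + (D:ℤ))+1)^2 : ℤ) := by
        exact_mod_cast this
      push_cast at h2
      rw [h2]
    have h21 : 2*(9*(M:ℝ)+(D:ℝ))+1 ≤ 21*(M:ℝ)*(D:ℝ) := by nlinarith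
    have hchain : (((box (9*M + (D:ℤ))).card : ℝ)) * ((5:ℝ)^(D+1))
          * (120000 * (D:ℝ)^2 * (M:ℝ)^4)^2 ≤ CD * (M:ℝ)^10 := by
      rw [hcardbox]
      have hsq : (2*(9*(M:ℝ)+(D:ℝ))+1)^2 ≤ (21*(M:ℝ)*(D:ℝ))^2 := by
        apply pow_le_pow_left₀ (by positivity) h21
      calc (2*(9*(M:ℝ)+(D:ℝ))+1)^2 * ((5:ℝ)^(D+1)) * (120000 * (D:ℝ)^2 * (M:ℝ)^4)^2
          ≤ (21*(M:ℝ)*(D:ℝ))^2 * ((5:ℝ)^(D+1)) * (120000 * (D:ℝ)^2 * (M:ℝ)^4)^2 := by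
            apply mul_le_mul_of_nonneg_right (mul_le_mul_of_nonneg_right hsq (by positivity))
              (by positivity)
        _ = CD * (M:ℝ)^10 := by rw [hCD]; ring
    have hstrict : CD * (M:ℝ)^10 < ε * (M:ℝ)^11 := by
      have := mul_lt_mul_of_pos_right hεM (pow_pos hM0 10)
      calc CD * (M:ℝ)^10 < ε * (M:ℝ) * (M:ℝ)^10 := this
        _ = ε * (M:ℝ)^11 := by ring
    have hedge : ε * (M:ℝ)^11 ≤ ε * ∑' e : G × ↥Z2gens, fM M e ^ 2 := by
      apply mul_le_mul_of_nonneg_left _ hε.le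
      have hcast : ((1152 * M^11 : ℤ) : ℝ) = 1152 * (M:ℝ)^11 := by push_cast; ring
      rw [hcast] at hlb
      nlinarith [pow_pos hM0 11]
    linarith
  end Stmt11


/-- For every `D ≥ 3`, the Cayley graph of `ℤ²` with generating set
`{(1,0),(0,1)}` does not have a coexact 1-Laplacian spectral gap for `D`; equivalently,
for every `ε > 0` there is a finitely supported closed 1-cochain `f` with
`Σ_e f(e)² > 0` and `Σ_{c face} ((df)(c))² < ε·Σ_e f(e)²`. -/
theorem coexact_stmt_11 (D : ℕ) (hD : 3 ≤ D) :
    ¬ CayHasGap Z2gens D ∧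
    ∀ ε : ℝ, 0 < ε → ∃ f : Multiplicative (ℤ × ℤ) × ↥Z2gens → ℝ,
      (Function.support f).Finite ∧ (∀ v, cayBdry Z2gens f v = 0) ∧
      0 < ∑' e : Multiplicative (ℤ × ℤ) × ↥Z2gens, f e ^ 2 ∧
      ∑' c : Face (cayley Z2gens) D, cayFaceVal Z2gens D f c ^ 2 <
        ε * ∑' e : Multiplicative (ℤ × ℤ) × ↥Z2gens, f e ^ 2 := by
  constructor
  · rintro ⟨ε0, hε0, hgap⟩
    obtain ⟨f, hfin, hclosed, hpos, hlt⟩ := Stmt11.main2 D hD ε0 hε0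
    have := hgap f hfin hclosed
    linarith
  · exact fun ε hε => Stmt11.main2 D hD ε hε
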